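/- Let G=(V,E) be a finite simple graph with boundary set ∂V ⊆ V such that every diagonal entry of D is strictly positive and such that vol(S) > 0 for every nonempty S ⊆ V. Then λ_R ≥ h_R²/2, i.e. the first nontrivial eigenvalue of the normalized reflected Neumann graph Laplacian is at least half the square of the Cheeger constant h_R. -/

import Mathlib

open Matrix Finset

namespace RN

variable {V : Type*}

/-- The adjacency matrix of `G` with real entries. -/
noncomputable def adjMat [Fintype V] [DecidableEq V] (G : SimpleGraph V) [DecidableRel G.Adj] :
    Matrix V V ℝ :=
  Matrix.of fun u v => if G.Adj u v then 1 else 0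

/-- The reflected adjacency matrix `R = [[A₁₁, A₁₂],[2A₁₂ᵀ, A₂₂]]`, where the first block is
indexed by the interior vertices and the second block by the boundary vertices `B`. -/
noncomputable def reflAdj [Fintype V] [DecidableEq V] (G : SimpleGraph V) [DecidableRel G.Adj]
    (B : Finset V) : Matrix V V ℝ :=
  Matrix.of fun u v => (if u ∈ B ∧ v ∉ B then 2 else 1) * adjMat G u v

/-- The diagonal entries of `D = diag(R·1)`. -/
noncomputable def deg [Fintype V] [DecidableEq V] (G : SimpleGraph V) [DecidableRel G.Adj]
    (B : Finset V) (v : V) : ℝ :=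
  ∑ w, reflAdj G B v w

/-- `D = diag(R·1)`. -/
noncomputable def Dmat [Fintype V] [DecidableEq V] (G : SimpleGraph V) [DecidableRel G.Adj]
    (B : Finset V) : Matrix V V ℝ :=
  Matrix.diagonal (deg G B)

/-- The reflected Neumann Laplacian `L_R = D - R`. -/
noncomputable def LR [Fintype V] [DecidableEq V] (G : SimpleGraph V) [DecidableRel G.Adj]
    (B : Finset V) : Matrix V V ℝ :=
  Dmat G B - reflAdj G B

/-- The weight `q_v`, which is `1` on interior vertices and `1/2` on boundary vertices. -/
noncomputable def qw [DecidableEq V] (B : Finset V) (v : V) : ℝ := if v ∈ B then 1/2 else 1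

/-- The diagonal matrix `Q` with entries `1` on the interior and `1/2` on the boundary. -/
noncomputable def Qmat [Fintype V] [DecidableEq V] (B : Finset V) : Matrix V V ℝ :=
  Matrix.diagonal (qw B)

/-- `D^{1/2}`. -/
noncomputable def Dhalf [Fintype V] [DecidableEq V] (G : SimpleGraph V) [DecidableRel G.Adj]
    (B : Finset V) : Matrix V V ℝ :=
  Matrix.diagonal fun v => Real.sqrt (deg G B v)

/-- `D^{-1/2}`. -/
noncomputable def Dinvhalf [Fintype V] [DecidableEq V] (G : SimpleGraph V) [DecidableRel G.Adj]
    (B : Finset V) : Matrix V V ℝ :=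
  Matrix.diagonal fun v => (Real.sqrt (deg G B v))⁻¹

/-- The normalized reflected Neumann Laplacian `𝓛_R = D^{-1/2} L_R D^{-1/2}`. -/
noncomputable def NLR [Fintype V] [DecidableEq V] (G : SimpleGraph V) [DecidableRel G.Adj]
    (B : Finset V) : Matrix V V ℝ :=
  Dinvhalf G B * LR G B * Dinvhalf G B

/-- `Q^{1/2}`. -/
noncomputable def Qhalf [Fintype V] [DecidableEq V] (B : Finset V) : Matrix V V ℝ :=
  Matrix.diagonal fun v => Real.sqrt (qw B v)

/-- `Q^{-1/2}`. -/
noncomputable def Qinvhalf [Fintype V] [DecidableEq V] (B : Finset V) : Matrix V V ℝ :=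
  Matrix.diagonal fun v => (Real.sqrt (qw B v))⁻¹

/-- The first nontrivial eigenvalue `λ_R` of `𝓛_R`: the infimum of the Rayleigh quotients
`xᵀ (Q^{1/2} 𝓛_R Q^{-1/2}) x / xᵀx` over nonzero `x` with `xᵀ D^{1/2} Q^{1/2} 1 = 0`. -/
noncomputable def lambdaR [Fintype V] [DecidableEq V] (G : SimpleGraph V) [DecidableRel G.Adj]
    (B : Finset V) : ℝ :=
  sInf {r : ℝ | ∃ x : V → ℝ, x ≠ 0 ∧
    x ⬝ᵥ ((Dhalf G B * Qhalf B) *ᵥ fun _ => 1) = 0 ∧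
    r = x ⬝ᵥ ((Qhalf B * NLR G B * Qinvhalf B) *ᵥ x) / (x ⬝ᵥ x)}

/-- `|E(U,W)|`: the number of edges of `G` with one endpoint in `U` and one in `W`. -/
def ecount [Fintype V] [DecidableEq V] (G : SimpleGraph V) [DecidableRel G.Adj]
    (U W : Finset V) : ℕ :=
  (G.edgeFinset.filter fun e => ∃ u ∈ U, ∃ w ∈ W, e = s(u, w)).card

/-- The measure `m(U,W) = |E(U,W)| - (1/2)|E(U ∩ ∂V, W ∩ ∂V)|`, where `B = ∂V`. -/
noncomputable def mMeas [Fintype V] [DecidableEq V] (G : SimpleGraph V) [DecidableRel G.Adj]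
    (B : Finset V) (U W : Finset V) : ℝ :=
  (ecount G U W : ℝ) - (1/2) * (ecount G (U ∩ B) (W ∩ B) : ℝ)

/-- The volume `vol(U) = Σ_{u ∈ U} m({u}, V)`. -/
noncomputable def vol [Fintype V] [DecidableEq V] (G : SimpleGraph V) [DecidableRel G.Adj]
    (B : Finset V) (U : Finset V) : ℝ :=
  ∑ u ∈ U, mMeas G B {u} Finset.univ

/-- The Cheeger constant `h_R`: the infimum over nonempty proper subsets `S ⊆ V` of
`m(S, V∖S) / min(vol S, vol (V∖S))`. -/
noncomputable def cheegerR [Fintype V] [DecidableEq V] (G : SimpleGraph V) [DecidableRel G.Adj]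
    (B : Finset V) : ℝ :=
  sInf {r : ℝ | ∃ S : Finset V, S.Nonempty ∧ S ≠ Finset.univ ∧
    r = mMeas G B S Sᶜ / min (vol G B S) (vol G B Sᶜ)}

section aux
variable [Fintype V] [DecidableEq V] (G : SimpleGraph V) [DecidableRel G.Adj] (B : Finset V)

/-- symmetric edge weights -/
noncomputable def ew (u v : V) : ℝ :=
  (if u ∈ B ∧ v ∈ B then (1/2 : ℝ) else 1) * adjMat G u v

/-- vertex measure -/
noncomputable def mu (v : V) : ℝ := qw B v * deg G B v

lemma adjMat_nonneg (u v : V) : 0 ≤ adjMat G u v := by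
  unfold adjMat; simp only [Matrix.of_apply]; split <;> norm_num

lemma adjMat_symm (u v : V) : adjMat G u v = adjMat G v u := by
  unfold adjMat; simp only [Matrix.of_apply, G.adj_comm]

lemma adjMat_self (u : V) : adjMat G u u = 0 := by
  unfold adjMat; simp

lemma ew_symm (u v : V) : ew G B u v = ew G B v u := by
  unfold ew; rw [adjMat_symm]; by_cases hu : u ∈ B <;> by_cases hv : v ∈ B <;> simp [hu, hv]

lemma ew_nonneg (u v : V) : 0 ≤ ew G B u v := by
  unfold ew
  have := adjMat_nonneg G u v
  split <;> nlinarith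

lemma ew_self (u : V) : ew G B u u = 0 := by
  unfold ew; rw [adjMat_self]; ring

omit [Fintype V] in
lemma qw_pos (v : V) : 0 < qw B v := by
  unfold qw; split <;> norm_num

lemma ew_eq_q_mul_reflAdj (u v : V) : ew G B u v = qw B u * reflAdj G B u v := by
  unfold ew qw reflAdj
  simp only [Matrix.of_apply]
  by_cases hu : u ∈ B <;> by_cases hv : v ∈ B <;> simp [hu, hv]

lemma mu_eq_sum (u : V) : mu G B u = ∑ v, ew G B u v := by
  unfold mu deg
  rw [Finset.mul_sum]
  exact Finset.sum_congr rfl fun v _ => (ew_eq_q_mul_reflAdj G B u v).symm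

lemma mu_pos (hD : ∀ v, 0 < deg G B v) (v : V) : 0 < mu G B v :=
  mul_pos (qw_pos B v) (hD v)

lemma ecount_eq_of_disjoint (U W : Finset V) (hUW : Disjoint U W) :
    (ecount G U W : ℝ) = ∑ u ∈ U, ∑ w ∈ W, adjMat G u w := by
  have hcard : ((U ×ˢ W).filter fun p => G.Adj p.1 p.2).card = ecount G U W := by
    apply Finset.card_bij (fun p _ => s(p.1, p.2))
    · intro p hp
      rw [Finset.mem_filter] at hp
      obtain ⟨hpm, hadj⟩ := hp
      rw [Finset.mem_product] at hpm
      rw [Finset.mem_filter]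
      refine ⟨?_, p.1, hpm.1, p.2, hpm.2, rfl⟩
      rw [SimpleGraph.mem_edgeFinset, SimpleGraph.mem_edgeSet]
      exact hadj
    · intro a ha b hb hab
      rw [Finset.mem_filter, Finset.mem_product] at ha hb
      rw [Sym2.mk_eq_mk_iff (p := a) (q := b)] at hab
      rcases hab with h | h
      · exact h
      · exfalso
        obtain ⟨h1', _⟩ := Prod.ext_iff.mp h
        rw [Prod.fst_swap] at h1'
        have h1 : a.1 ∈ U := ha.1.1
        have h2 : a.1 ∈ W := by
          rw [h1']; exact hb.1.2
        exact (Finset.disjoint_left.mp hUW h1) h2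
    · intro e he
      rw [Finset.mem_filter] at he
      obtain ⟨hedge, u, hu, w, hw, rfl⟩ := he
      rw [SimpleGraph.mem_edgeFinset, SimpleGraph.mem_edgeSet] at hedge
      exact ⟨(u, w), Finset.mem_filter.mpr ⟨Finset.mem_product.mpr ⟨hu, hw⟩, hedge⟩, rfl⟩
  rw [← hcard, Finset.card_filter, Finset.sum_product]
  push_cast
  apply Finset.sum_congr rfl; intro u _; apply Finset.sum_congr rfl; intro w _
  unfold adjMat
  simp

lemma ecount_singleton (u : V) (W : Finset V) :
    (ecount G {u} W : ℝ) = ∑ w ∈ W, adjMat G u w := by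
  have hcard : (W.filter fun w => G.Adj u w).card = ecount G {u} W := by
    apply Finset.card_bij (fun w _ => s(u, w))
    · intro w hw
      rw [Finset.mem_filter] at hw
      rw [Finset.mem_filter]
      refine ⟨?_, u, Finset.mem_singleton_self u, w, hw.1, rfl⟩
      rw [SimpleGraph.mem_edgeFinset, SimpleGraph.mem_edgeSet]
      exact hw.2
    · intro a ha b hb hab
      rw [Sym2.mk_eq_mk_iff (p := (u, a)) (q := (u, b))] at hab
      rcases hab with h | h
      · exact (Prod.ext_iff.mp h).2
      · obtain ⟨h1', h2'⟩ := Prod.ext_iff.mp h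
        rw [Prod.fst_swap] at h1'
        rw [Prod.snd_swap] at h2'
        exact h2'.trans h1'
    · intro e he
      rw [Finset.mem_filter] at he
      obtain ⟨hedge, a, ha, w, hw, rfl⟩ := he
      rw [Finset.mem_singleton] at ha
      subst ha
      rw [SimpleGraph.mem_edgeFinset, SimpleGraph.mem_edgeSet] at hedge
      exact ⟨w, Finset.mem_filter.mpr ⟨hw, hedge⟩, rfl⟩
  rw [← hcard, Finset.card_filter]
  push_cast
  apply Finset.sum_congr rfl; intro w _
  unfold adjMat
  simp

lemma ecount_mono {U' U W' W : Finset V} (hU : U' ⊆ U) (hW : W' ⊆ W) :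
    ecount G U' W' ≤ ecount G U W := by
  apply Finset.card_le_card
  intro e he
  rw [Finset.mem_filter] at he ⊢
  obtain ⟨h1, u, hu, w, hw, rfl⟩ := he
  exact ⟨h1, u, hU hu, w, hW hw, rfl⟩

noncomputable def volmu (S : Finset V) : ℝ := ∑ v ∈ S, mu G B v

lemma ecount_empty_left (W : Finset V) : ecount G ∅ W = 0 := by
  unfold ecount
  rw [Finset.card_eq_zero, Finset.filter_eq_empty_iff]
  rintro e _ ⟨u, hu, _⟩
  exact absurd hu (Finset.notMem_empty u)

lemma mMeas_single (u : V) : mMeas G B {u} Finset.univ = mu G B u := by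
  rw [mu_eq_sum]
  unfold mMeas
  rw [Finset.univ_inter, ecount_singleton]
  by_cases hu : u ∈ B
  · have h1 : {u} ∩ B = {u} := by
      rw [Finset.inter_eq_left, Finset.singleton_subset_iff]; exact hu
    rw [h1, ecount_singleton]
    have h2 : ∑ w ∈ B, adjMat G u w = ∑ w, if w ∈ B then adjMat G u w else 0 := by
      rw [Finset.sum_ite_mem, Finset.univ_inter]
    rw [h2, Finset.mul_sum, ← Finset.sum_sub_distrib]
    apply Finset.sum_congr rfl
    intro v _
    unfold ew
    by_cases hv : v ∈ B <;> simp [hu, hv] <;> ring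
  · have h1 : {u} ∩ B = ∅ := by
      rw [Finset.singleton_inter_of_notMem hu]
    rw [h1, ecount_empty_left]
    push_cast
    ring_nf
    apply Finset.sum_congr rfl
    intro v _
    unfold ew
    simp [hu]

lemma vol_eq (S : Finset V) : vol G B S = volmu G B S := by
  unfold vol volmu
  exact Finset.sum_congr rfl fun u _ => mMeas_single G B u

lemma mMeas_cut (S : Finset V) :
    mMeas G B S Sᶜ = ∑ u ∈ S, ∑ v ∈ Sᶜ, ew G B u v := by
  unfold mMeas
  rw [ecount_eq_of_disjoint G S Sᶜ disjoint_compl_right,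
    ecount_eq_of_disjoint G (S ∩ B) (Sᶜ ∩ B)
      (Finset.disjoint_of_subset_left Finset.inter_subset_left
        (Finset.disjoint_of_subset_right Finset.inter_subset_left disjoint_compl_right))]
  have h2 : ∑ u ∈ S ∩ B, ∑ v ∈ Sᶜ ∩ B, adjMat G u v
      = ∑ u ∈ S, ∑ v ∈ Sᶜ, if u ∈ B ∧ v ∈ B then adjMat G u v else 0 := by
    rw [← Finset.sum_ite_mem S B]
    apply Finset.sum_congr rfl
    intro u _
    by_cases hu : u ∈ B
    · simp only [hu, if_true, true_and]
      rw [← Finset.sum_ite_mem Sᶜ B]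
    · simp [hu]
  rw [h2, Finset.mul_sum, ← Finset.sum_sub_distrib]
  apply Finset.sum_congr rfl; intro u _
  rw [Finset.mul_sum, ← Finset.sum_sub_distrib]
  apply Finset.sum_congr rfl; intro v _
  unfold ew
  by_cases hu : u ∈ B <;> by_cases hv : v ∈ B <;> simp [hu, hv] <;> ring

lemma cutw_nonneg (S : Finset V) : 0 ≤ ∑ u ∈ S, ∑ v ∈ Sᶜ, ew G B u v :=
  Finset.sum_nonneg fun u _ => Finset.sum_nonneg fun v _ => ew_nonneg G B u v

omit [DecidableEq V] in
lemma compl_nonempty_of_ne_univ {S : Finset V} [DecidableEq V] (h : S ≠ Finset.univ) :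
    Sᶜ.Nonempty := by
  rw [Finset.nonempty_iff_ne_empty]
  intro hc
  exact h (((Finset.compl_eq_empty_iff S).mp hc))

lemma cheeger_elem_nonneg (hvol : ∀ S : Finset V, S.Nonempty → 0 < vol G B S) {r : ℝ}
    (hr : r ∈ {r : ℝ | ∃ S : Finset V, S.Nonempty ∧ S ≠ Finset.univ ∧
      r = mMeas G B S Sᶜ / min (vol G B S) (vol G B Sᶜ)}) : 0 ≤ r := by
  obtain ⟨S, hS, hSu, rfl⟩ := hr
  apply div_nonneg
  · unfold mMeas
    have h := ecount_mono G (U' := S ∩ B) (W' := Sᶜ ∩ B) (U := S) (W := Sᶜ)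
      Finset.inter_subset_left Finset.inter_subset_left
    have h2 : (ecount G (S ∩ B) (Sᶜ ∩ B) : ℝ) ≤ (ecount G S Sᶜ : ℝ) := Nat.cast_le.mpr h
    have h3 : (0 : ℝ) ≤ (ecount G (S ∩ B) (Sᶜ ∩ B) : ℝ) := Nat.cast_nonneg _
    linarith
  · exact le_min (hvol S hS).le (hvol Sᶜ (compl_nonempty_of_ne_univ hSu)).le

lemma cheeger_nonneg (hvol : ∀ S : Finset V, S.Nonempty → 0 < vol G B S)
    (hne : {r : ℝ | ∃ S : Finset V, S.Nonempty ∧ S ≠ Finset.univ ∧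
      r = mMeas G B S Sᶜ / min (vol G B S) (vol G B Sᶜ)}.Nonempty) :
    0 ≤ cheegerR G B :=
  le_csInf hne fun _ hr => cheeger_elem_nonneg G B hvol hr

lemma cheeger_cut (hvol : ∀ S : Finset V, S.Nonempty → 0 < vol G B S)
    (S : Finset V) (hS : S.Nonempty) (hSu : S ≠ Finset.univ) :
    cheegerR G B * min (volmu G B S) (volmu G B Sᶜ) ≤ ∑ u ∈ S, ∑ v ∈ Sᶜ, ew G B u v := by
  have hmem : mMeas G B S Sᶜ / min (vol G B S) (vol G B Sᶜ) ∈
      {r : ℝ | ∃ S : Finset V, S.Nonempty ∧ S ≠ Finset.univ ∧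
        r = mMeas G B S Sᶜ / min (vol G B S) (vol G B Sᶜ)} := ⟨S, hS, hSu, rfl⟩
  have hbdd : BddBelow {r : ℝ | ∃ S : Finset V, S.Nonempty ∧ S ≠ Finset.univ ∧
      r = mMeas G B S Sᶜ / min (vol G B S) (vol G B Sᶜ)} :=
    ⟨0, fun r hr => cheeger_elem_nonneg G B hvol hr⟩
  have h : cheegerR G B ≤ mMeas G B S Sᶜ / min (vol G B S) (vol G B Sᶜ) :=
    csInf_le hbdd hmem
  have hmin : 0 < min (vol G B S) (vol G B Sᶜ) :=
    lt_min (hvol S hS) (hvol Sᶜ (compl_nonempty_of_ne_univ hSu))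
  rw [← mMeas_cut, ← vol_eq, ← vol_eq]
  calc cheegerR G B * min (vol G B S) (vol G B Sᶜ)
      ≤ (mMeas G B S Sᶜ / min (vol G B S) (vol G B Sᶜ)) * min (vol G B S) (vol G B Sᶜ) := by
        apply mul_le_mul_of_nonneg_right h hmin.le
    _ = mMeas G B S Sᶜ := div_mul_cancel₀ _ hmin.ne'

lemma volmu_empty : volmu G B ∅ = 0 := Finset.sum_empty

lemma volmu_nonneg (hD : ∀ v, 0 < deg G B v) (S : Finset V) : 0 ≤ volmu G B S :=
  Finset.sum_nonneg fun v _ => (mu_pos G B hD v).le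

lemma volmu_mono (hD : ∀ v, 0 < deg G B v) {S T : Finset V} (hST : S ⊆ T) :
    volmu G B S ≤ volmu G B T :=
  Finset.sum_le_sum_of_subset_of_nonneg hST fun v _ _ => (mu_pos G B hD v).le

lemma volmu_add_compl (S : Finset V) :
    volmu G B S + volmu G B Sᶜ = volmu G B Finset.univ :=
  Finset.sum_add_sum_compl S _

lemma exists_median (hD : ∀ v, 0 < deg G B v) (hV : (Finset.univ : Finset V).Nonempty)
    (f : V → ℝ) :
    ∃ c : ℝ, volmu G B (Finset.univ.filter fun v => c < f v) ≤ volmu G B Finset.univ / 2 ∧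
      volmu G B (Finset.univ.filter fun v => f v < c) ≤ volmu G B Finset.univ / 2 := by
  have hvu : 0 ≤ volmu G B Finset.univ := volmu_nonneg G B hD _
  set T := Finset.univ.image f with hT
  have hTne : T.Nonempty := hV.image f
  set C := T.filter (fun t =>
    volmu G B (Finset.univ.filter fun v => t < f v) ≤ volmu G B Finset.univ / 2) with hC
  have hmaxmem : T.max' hTne ∈ C := by
    rw [hC, Finset.mem_filter]
    refine ⟨T.max'_mem hTne, ?_⟩
    have hemp : (Finset.univ.filter fun v => T.max' hTne < f v) = ∅ := by
      rw [Finset.filter_eq_empty_iff]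
      intro v _
      exact not_lt.mpr (Finset.le_max' T (f v) (Finset.mem_image_of_mem f (Finset.mem_univ v)))
    rw [hemp, volmu_empty]
    linarith
  have hCne : C.Nonempty := ⟨_, hmaxmem⟩
  refine ⟨C.min' hCne, ?_, ?_⟩
  · exact (Finset.mem_filter.mp (C.min'_mem hCne)).2
  · by_cases hSl : (Finset.univ.filter fun v => f v < C.min' hCne).Nonempty
    · obtain ⟨v₀, hv₀, hmaxv⟩ := Finset.exists_max_image _ f hSl
      rw [Finset.mem_filter] at hv₀
      have htT : f v₀ ∈ T := Finset.mem_image_of_mem f (Finset.mem_univ v₀)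
      have htc : f v₀ < C.min' hCne := hv₀.2
      have htnC : f v₀ ∉ C := fun hmem => absurd (C.min'_le _ hmem) (not_le.mpr htc)
      have hbig : volmu G B Finset.univ / 2 <
          volmu G B (Finset.univ.filter fun v => f v₀ < f v) := by
        by_contra hle
        push_neg at hle
        exact htnC (Finset.mem_filter.mpr ⟨htT, hle⟩)
      have hsub : (Finset.univ.filter fun v => f v < C.min' hCne) ⊆
          (Finset.univ.filter fun v => f v₀ < f v)ᶜ := by
        intro v hv
        rw [Finset.mem_compl, Finset.mem_filter]
        push_neg
        intro _
        exact hmaxv v hv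
      have h1 := volmu_mono G B hD hsub
      have h2 := volmu_add_compl G B (Finset.univ.filter fun v => f v₀ < f v)
      linarith
    · rw [Finset.not_nonempty_iff_eq_empty] at hSl
      rw [hSl, volmu_empty]
      linarith

lemma sum_pull_ite (c : Prop) [Decidable c] (h : V → ℝ) :
    ∑ v, (if c then h v else 0) = if c then ∑ v, h v else 0 := by
  split_ifs <;> simp

lemma coarea (hD : ∀ v, 0 < deg G B v) (hvol : ∀ S : Finset V, S.Nonempty → 0 < vol G B S) :
    ∀ n : ℕ, ∀ g : V → ℝ, (∀ v, 0 ≤ g v) →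
    volmu G B (Finset.univ.filter fun v => g v ≠ 0) ≤ volmu G B Finset.univ / 2 →
    (Finset.univ.filter fun v => g v ≠ 0).card = n →
    2 * cheegerR G B * ∑ v, mu G B v * g v ^ 2 ≤
      ∑ u, ∑ v, ew G B u v * |g u ^ 2 - g v ^ 2| := by
  intro n
  induction n using Nat.strong_induction_on with
  | _ n ih =>
  intro g hg hsupp hn
  by_cases hS : (Finset.univ.filter fun v => g v ≠ 0).Nonempty
  case neg =>
    have hg0 : ∀ v, g v = 0 := by
      intro v
      by_contra h
      exact hS ⟨v, Finset.mem_filter.mpr ⟨Finset.mem_univ v, h⟩⟩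
    simp [hg0]
  case pos =>
  set S := Finset.univ.filter fun v => g v ≠ 0 with hSdef
  obtain ⟨v₀, hv₀, hminv⟩ := Finset.exists_min_image S g hS
  set m := g v₀ with hmdef
  have hm : 0 < m := by
    have h1 := (Finset.mem_filter.mp hv₀).2
    exact lt_of_le_of_ne (hg v₀) (Ne.symm h1)
  have hmem_sq : ∀ v ∈ S, m ^ 2 ≤ g v ^ 2 := by
    intro v hv
    exact pow_le_pow_left₀ hm.le (hminv v hv) 2
  set g' : V → ℝ := fun v => Real.sqrt (max (g v ^ 2 - m ^ 2) 0) with hg'def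
  have hg'sq : ∀ v, g' v ^ 2 = max (g v ^ 2 - m ^ 2) 0 := by
    intro v
    exact Real.sq_sqrt (le_max_right _ _)
  have hg'nonneg : ∀ v, 0 ≤ g' v := fun v => Real.sqrt_nonneg _
  have hg'S : ∀ v ∈ S, g' v ^ 2 = g v ^ 2 - m ^ 2 := by
    intro v hv
    rw [hg'sq v]
    exact max_eq_left (by linarith [hmem_sq v hv])
  have hgnS : ∀ v, v ∉ S → g v = 0 := by
    intro v hv
    by_contra h
    exact hv (Finset.mem_filter.mpr ⟨Finset.mem_univ v, h⟩)
  have hg'nS : ∀ v, v ∉ S → g' v = 0 := by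
    intro v hv
    have h1 : g' v ^ 2 = 0 := by
      rw [hg'sq v, hgnS v hv]
      have h2 : (0:ℝ) ^ 2 - m ^ 2 ≤ 0 := by nlinarith
      exact max_eq_right h2
    exact pow_eq_zero_iff (n := 2) (by norm_num) |>.mp h1
  have hsub : (Finset.univ.filter fun v => g' v ≠ 0) ⊆ S.erase v₀ := by
    intro v hv
    rw [Finset.mem_filter] at hv
    have h2 : g' v ^ 2 ≠ 0 := pow_ne_zero 2 hv.2
    rw [hg'sq v] at h2
    have h3 : g v ^ 2 - m ^ 2 > 0 := by
      by_contra h4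
      push_neg at h4
      exact h2 (max_eq_right h4)
    have hvS : v ∈ S := by
      rw [hSdef, Finset.mem_filter]
      refine ⟨Finset.mem_univ v, ?_⟩
      intro h5
      rw [h5] at h3
      nlinarith
    refine Finset.mem_erase.mpr ⟨?_, hvS⟩
    intro h5
    rw [h5] at h3
    simp [hmdef] at h3
  have hcard : (Finset.univ.filter fun v => g' v ≠ 0).card < n := by
    calc (Finset.univ.filter fun v => g' v ≠ 0).card ≤ (S.erase v₀).card :=
          Finset.card_le_card hsub
      _ < S.card := Finset.card_erase_lt_of_mem hv₀
      _ = n := hn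
  have hsupp' : volmu G B (Finset.univ.filter fun v => g' v ≠ 0) ≤ volmu G B Finset.univ / 2 := by
    refine le_trans (volmu_mono G B hD ?_) hsupp
    exact hsub.trans (Finset.erase_subset v₀ S)
  have hIH := ih _ hcard g' hg'nonneg hsupp' rfl
  have key1 : ∑ v, mu G B v * g v ^ 2
      = (∑ v, mu G B v * g' v ^ 2) + m ^ 2 * volmu G B S := by
    have hpt : ∀ v, mu G B v * g v ^ 2
        = mu G B v * g' v ^ 2 + (if v ∈ S then m ^ 2 * mu G B v else 0) := by
      intro v
      by_cases hv : v ∈ S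
      · rw [hg'S v hv, if_pos hv]; ring
      · rw [hgnS v hv, hg'nS v hv, if_neg hv]; ring
    calc ∑ v, mu G B v * g v ^ 2
        = ∑ v, (mu G B v * g' v ^ 2 + (if v ∈ S then m ^ 2 * mu G B v else 0)) :=
          Finset.sum_congr rfl fun v _ => hpt v
      _ = (∑ v, mu G B v * g' v ^ 2) + ∑ v, (if v ∈ S then m ^ 2 * mu G B v else 0) :=
          Finset.sum_add_distrib
      _ = (∑ v, mu G B v * g' v ^ 2) + m ^ 2 * volmu G B S := by
          rw [Finset.sum_ite_mem, Finset.univ_inter]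
          unfold volmu
          rw [Finset.mul_sum]
  have key2 : ∑ u, ∑ v, ew G B u v * |g u ^ 2 - g v ^ 2|
      = (∑ u, ∑ v, ew G B u v * |g' u ^ 2 - g' v ^ 2|)
        + 2 * (m ^ 2 * ∑ u ∈ S, ∑ v ∈ Sᶜ, ew G B u v) := by
    have hpt : ∀ u v, ew G B u v * |g u ^ 2 - g v ^ 2|
        = ew G B u v * |g' u ^ 2 - g' v ^ 2|
          + (if u ∈ S then (if v ∈ Sᶜ then ew G B u v * m ^ 2 else 0) else 0)
          + (if v ∈ S then (if u ∈ Sᶜ then ew G B u v * m ^ 2 else 0) else 0) := by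
      intro u v
      by_cases hu : u ∈ S <;> by_cases hv : v ∈ S
      · rw [hg'S u hu, hg'S v hv, if_pos hu, if_pos hv,
          if_neg (fun h => Finset.mem_compl.mp h hv), if_neg (fun h => Finset.mem_compl.mp h hu)]
        have h0 : g u ^ 2 - m ^ 2 - (g v ^ 2 - m ^ 2) = g u ^ 2 - g v ^ 2 := by ring
        rw [h0]; ring
      · have e1 : |g u ^ 2 - g v ^ 2| = g u ^ 2 := by
          rw [hgnS v hv]
          rw [show (0:ℝ) ^ 2 = 0 by norm_num, sub_zero]
          exact abs_of_nonneg (sq_nonneg _)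
        have e2 : |g' u ^ 2 - g' v ^ 2| = g u ^ 2 - m ^ 2 := by
          rw [hg'nS v hv, hg'S u hu]
          rw [show (0:ℝ) ^ 2 = 0 by norm_num, sub_zero]
          exact abs_of_nonneg (by linarith [hmem_sq u hu])
        rw [e1, e2, if_pos hu, if_pos (Finset.mem_compl.mpr hv), if_neg hv]
        ring
      · have e1 : |g u ^ 2 - g v ^ 2| = g v ^ 2 := by
          rw [hgnS u hu]
          rw [show (0:ℝ) ^ 2 = 0 by norm_num, zero_sub, abs_neg]
          exact abs_of_nonneg (sq_nonneg _)
        have e2 : |g' u ^ 2 - g' v ^ 2| = g v ^ 2 - m ^ 2 := by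
          rw [hg'nS u hu, hg'S v hv]
          rw [show (0:ℝ) ^ 2 = 0 by norm_num, zero_sub, abs_neg]
          exact abs_of_nonneg (by linarith [hmem_sq v hv])
        rw [e1, e2, if_pos hv, if_pos (Finset.mem_compl.mpr hu), if_neg hu]
        ring
      · rw [hgnS u hu, hgnS v hv, hg'nS u hu, hg'nS v hv, if_neg hu, if_neg hv]
        ring
    have hp1 : (∑ u, ∑ v, (if u ∈ S then (if v ∈ Sᶜ then ew G B u v * m ^ 2 else 0) else 0))
        = m ^ 2 * ∑ u ∈ S, ∑ v ∈ Sᶜ, ew G B u v := by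
      calc ∑ u, ∑ v, (if u ∈ S then (if v ∈ Sᶜ then ew G B u v * m ^ 2 else 0) else 0)
          = ∑ u, (if u ∈ S then ∑ v, (if v ∈ Sᶜ then ew G B u v * m ^ 2 else 0) else 0) :=
            Finset.sum_congr rfl fun u _ => sum_pull_ite _ _
        _ = ∑ u ∈ S, ∑ v, (if v ∈ Sᶜ then ew G B u v * m ^ 2 else 0) := by
            rw [Finset.sum_ite_mem, Finset.univ_inter]
        _ = m ^ 2 * ∑ u ∈ S, ∑ v ∈ Sᶜ, ew G B u v := by
            rw [Finset.mul_sum]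
            refine Finset.sum_congr rfl fun u _ => ?_
            rw [Finset.sum_ite_mem, Finset.univ_inter, Finset.mul_sum]
            exact Finset.sum_congr rfl fun v _ => by ring
    have hp2 : (∑ u, ∑ v, (if v ∈ S then (if u ∈ Sᶜ then ew G B u v * m ^ 2 else 0) else 0))
        = m ^ 2 * ∑ u ∈ S, ∑ v ∈ Sᶜ, ew G B u v := by
      rw [Finset.sum_comm]
      calc ∑ v, ∑ u, (if v ∈ S then (if u ∈ Sᶜ then ew G B u v * m ^ 2 else 0) else 0)
          = ∑ v, (if v ∈ S then ∑ u, (if u ∈ Sᶜ then ew G B u v * m ^ 2 else 0) else 0) :=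
            Finset.sum_congr rfl fun v _ => sum_pull_ite _ _
        _ = ∑ v ∈ S, ∑ u, (if u ∈ Sᶜ then ew G B u v * m ^ 2 else 0) := by
            rw [Finset.sum_ite_mem, Finset.univ_inter]
        _ = m ^ 2 * ∑ u ∈ S, ∑ v ∈ Sᶜ, ew G B u v := by
            rw [Finset.mul_sum]
            refine Finset.sum_congr rfl fun v _ => ?_
            rw [Finset.sum_ite_mem, Finset.univ_inter, Finset.mul_sum]
            exact Finset.sum_congr rfl fun u _ => by rw [ew_symm]; ring
    calc ∑ u, ∑ v, ew G B u v * |g u ^ 2 - g v ^ 2|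
        = ∑ u, ∑ v, (ew G B u v * |g' u ^ 2 - g' v ^ 2|
          + (if u ∈ S then (if v ∈ Sᶜ then ew G B u v * m ^ 2 else 0) else 0)
          + (if v ∈ S then (if u ∈ Sᶜ then ew G B u v * m ^ 2 else 0) else 0)) :=
          Finset.sum_congr rfl fun u _ => Finset.sum_congr rfl fun v _ => hpt u v
      _ = (∑ u, ∑ v, ew G B u v * |g' u ^ 2 - g' v ^ 2|)
          + (∑ u, ∑ v, (if u ∈ S then (if v ∈ Sᶜ then ew G B u v * m ^ 2 else 0) else 0))
          + (∑ u, ∑ v, (if v ∈ S then (if u ∈ Sᶜ then ew G B u v * m ^ 2 else 0) else 0)) := by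
          simp only [Finset.sum_add_distrib]
      _ = (∑ u, ∑ v, ew G B u v * |g' u ^ 2 - g' v ^ 2|)
          + 2 * (m ^ 2 * ∑ u ∈ S, ∑ v ∈ Sᶜ, ew G B u v) := by
          rw [hp1, hp2]; ring
  have hVne : (Finset.univ : Finset V).Nonempty := ⟨v₀, Finset.mem_univ v₀⟩
  have hSuniv : S ≠ Finset.univ := by
    intro h
    rw [h] at hsupp
    have h2 := hvol Finset.univ hVne
    rw [vol_eq] at h2
    linarith
  have hmin : min (volmu G B S) (volmu G B Sᶜ) = volmu G B S := by
    apply min_eq_left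
    have h2 := volmu_add_compl G B S
    linarith
  have hcut := cheeger_cut G B hvol S hS hSuniv
  rw [hmin] at hcut
  have hfact := mul_le_mul_of_nonneg_left hcut (sq_nonneg m)
  rw [key1, key2]
  nlinarith [hIH]

lemma mu_eq_sum' (v : V) : mu G B v = ∑ u, ew G B u v := by
  rw [mu_eq_sum]
  exact Finset.sum_congr rfl fun u _ => ew_symm G B v u

lemma cs_bound (g : V → ℝ) (hg : ∀ v, 0 ≤ g v) :
    (∑ u, ∑ v, ew G B u v * |g u ^ 2 - g v ^ 2|) ^ 2 ≤
      (∑ u, ∑ v, ew G B u v * (g u - g v) ^ 2) * (4 * ∑ v, mu G B v * g v ^ 2) := by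
  have hCS := Finset.sum_mul_sq_le_sq_mul_sq (Finset.univ : Finset (V × V))
    (fun p => Real.sqrt (ew G B p.1 p.2) * |g p.1 - g p.2|)
    (fun p => Real.sqrt (ew G B p.1 p.2) * (g p.1 + g p.2))
  have hL : ∑ p : V × V, (Real.sqrt (ew G B p.1 p.2) * |g p.1 - g p.2|)
      * (Real.sqrt (ew G B p.1 p.2) * (g p.1 + g p.2))
      = ∑ u, ∑ v, ew G B u v * |g u ^ 2 - g v ^ 2| := by
    rw [Fintype.sum_prod_type]
    refine Finset.sum_congr rfl fun u _ => Finset.sum_congr rfl fun v _ => ?_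
    have h1 : Real.sqrt (ew G B u v) * Real.sqrt (ew G B u v) = ew G B u v :=
      Real.mul_self_sqrt (ew_nonneg G B u v)
    have h2 : |g u - g v| * (g u + g v) = |g u ^ 2 - g v ^ 2| := by
      rw [show g u ^ 2 - g v ^ 2 = (g u - g v) * (g u + g v) by ring, abs_mul,
        abs_of_nonneg (show (0:ℝ) ≤ g u + g v from by linarith [hg u, hg v])]
    calc Real.sqrt (ew G B u v) * |g u - g v| * (Real.sqrt (ew G B u v) * (g u + g v))
        = (Real.sqrt (ew G B u v) * Real.sqrt (ew G B u v)) * (|g u - g v| * (g u + g v)) := by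
          ring
      _ = ew G B u v * |g u ^ 2 - g v ^ 2| := by rw [h1, h2]
  have hF : ∑ p : V × V, (Real.sqrt (ew G B p.1 p.2) * |g p.1 - g p.2|) ^ 2
      = ∑ u, ∑ v, ew G B u v * (g u - g v) ^ 2 := by
    rw [Fintype.sum_prod_type]
    refine Finset.sum_congr rfl fun u _ => Finset.sum_congr rfl fun v _ => ?_
    rw [mul_pow, sq_abs, Real.sq_sqrt (ew_nonneg G B u v)]
  have hG : ∑ p : V × V, (Real.sqrt (ew G B p.1 p.2) * (g p.1 + g p.2)) ^ 2
      ≤ 4 * ∑ v, mu G B v * g v ^ 2 := by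
    have h1 : ∑ p : V × V, (Real.sqrt (ew G B p.1 p.2) * (g p.1 + g p.2)) ^ 2
        = ∑ u, ∑ v, ew G B u v * (g u + g v) ^ 2 := by
      rw [Fintype.sum_prod_type]
      refine Finset.sum_congr rfl fun u _ => Finset.sum_congr rfl fun v _ => ?_
      rw [mul_pow, Real.sq_sqrt (ew_nonneg G B u v)]
    rw [h1]
    have h2 : ∑ u, ∑ v, ew G B u v * (g u + g v) ^ 2
        ≤ ∑ u, ∑ v, (2 * (ew G B u v * g u ^ 2) + 2 * (ew G B u v * g v ^ 2)) := by
      refine Finset.sum_le_sum fun u _ => Finset.sum_le_sum fun v _ => ?_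
      nlinarith [mul_nonneg (ew_nonneg G B u v) (sq_nonneg (g u - g v))]
    refine h2.trans ?_
    have e1 : ∑ u, ∑ v, 2 * (ew G B u v * g u ^ 2) = 2 * ∑ u, mu G B u * g u ^ 2 := by
      rw [Finset.mul_sum]
      refine Finset.sum_congr rfl fun u _ => ?_
      rw [mu_eq_sum, Finset.sum_mul, Finset.mul_sum]
    have e2 : ∑ u, ∑ v, 2 * (ew G B u v * g v ^ 2) = 2 * ∑ v, mu G B v * g v ^ 2 := by
      rw [Finset.sum_comm, Finset.mul_sum]
      refine Finset.sum_congr rfl fun v _ => ?_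
      rw [mu_eq_sum', Finset.sum_mul, Finset.mul_sum]
    have h3 : ∑ u, ∑ v, (2 * (ew G B u v * g u ^ 2) + 2 * (ew G B u v * g v ^ 2))
        = 2 * (∑ u, mu G B u * g u ^ 2) + 2 * (∑ v, mu G B v * g v ^ 2) := by
      simp only [Finset.sum_add_distrib]
      rw [e1, e2]
    rw [h3]
    linarith
  calc (∑ u, ∑ v, ew G B u v * |g u ^ 2 - g v ^ 2|) ^ 2
      = (∑ p : V × V, (Real.sqrt (ew G B p.1 p.2) * |g p.1 - g p.2|)
        * (Real.sqrt (ew G B p.1 p.2) * (g p.1 + g p.2))) ^ 2 := by rw [hL]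
    _ ≤ (∑ p : V × V, (Real.sqrt (ew G B p.1 p.2) * |g p.1 - g p.2|) ^ 2)
        * ∑ p : V × V, (Real.sqrt (ew G B p.1 p.2) * (g p.1 + g p.2)) ^ 2 := hCS
    _ ≤ (∑ u, ∑ v, ew G B u v * (g u - g v) ^ 2) * (4 * ∑ v, mu G B v * g v ^ 2) := by
        rw [hF]
        apply mul_le_mul_of_nonneg_left hG
        exact Finset.sum_nonneg fun u _ => Finset.sum_nonneg fun v _ =>
          mul_nonneg (ew_nonneg G B u v) (sq_nonneg _)

lemma dirichlet_ge (hD : ∀ v, 0 < deg G B v) (hvol : ∀ S : Finset V, S.Nonempty → 0 < vol G B S)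
    (hch : 0 ≤ cheegerR G B) (g : V → ℝ) (hg : ∀ v, 0 ≤ g v)
    (hsupp : volmu G B (Finset.univ.filter fun v => g v ≠ 0) ≤ volmu G B Finset.univ / 2) :
    cheegerR G B ^ 2 / 2 * ∑ v, mu G B v * g v ^ 2 ≤
      (1/2) * ∑ u, ∑ v, ew G B u v * (g u - g v) ^ 2 := by
  have hco := coarea G B hD hvol _ g hg hsupp rfl
  have hcs := cs_bound G B g hg
  set T := ∑ v, mu G B v * g v ^ 2 with hTdef
  set C := ∑ u, ∑ v, ew G B u v * |g u ^ 2 - g v ^ 2| with hCdef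
  set Dd := ∑ u, ∑ v, ew G B u v * (g u - g v) ^ 2 with hDdef
  have hT : 0 ≤ T := Finset.sum_nonneg fun v _ =>
    mul_nonneg (mu_pos G B hD v).le (sq_nonneg _)
  have hDd : 0 ≤ Dd := Finset.sum_nonneg fun u _ => Finset.sum_nonneg fun v _ =>
    mul_nonneg (ew_nonneg G B u v) (sq_nonneg _)
  rcases eq_or_lt_of_le hT with hT0 | hTpos
  · rw [← hT0]
    linarith
  · have hsq : (2 * cheegerR G B * T) ^ 2 ≤ C ^ 2 := by
      apply pow_le_pow_left₀ (by positivity) hco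
    have h1 : 4 * cheegerR G B ^ 2 * T ^ 2 ≤ Dd * (4 * T) := by nlinarith
    have h2 : (cheegerR G B ^ 2 * T) * T ≤ Dd * T := by nlinarith
    have h3 : cheegerR G B ^ 2 * T ≤ Dd := le_of_mul_le_mul_right h2 hTpos
    linarith

omit [Fintype V] [DecidableEq V] in
lemma key_sq (a b : ℝ) :
    (max a 0 - max b 0) ^ 2 + (max (-a) 0 - max (-b) 0) ^ 2 ≤ (a - b) ^ 2 := by
  rcases le_total a 0 with ha | ha <;> rcases le_total b 0 with hb | hb
  · rw [max_eq_right ha, max_eq_right hb, max_eq_left (neg_nonneg.mpr ha),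
      max_eq_left (neg_nonneg.mpr hb)]
    nlinarith
  · rw [max_eq_right ha, max_eq_left hb, max_eq_left (neg_nonneg.mpr ha),
      max_eq_right (neg_nonpos.mpr hb)]
    nlinarith
  · rw [max_eq_left ha, max_eq_right hb, max_eq_right (neg_nonpos.mpr ha),
      max_eq_left (neg_nonneg.mpr hb)]
    nlinarith
  · rw [max_eq_left ha, max_eq_left hb, max_eq_right (neg_nonpos.mpr ha),
      max_eq_right (neg_nonpos.mpr hb)]
    nlinarith

omit [Fintype V] [DecidableEq V] in
lemma sq_split (x : ℝ) : max x 0 ^ 2 + max (-x) 0 ^ 2 = x ^ 2 := by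
  rcases le_total x 0 with hx | hx
  · rw [max_eq_right hx, max_eq_left (neg_nonneg.mpr hx)]
    ring
  · rw [max_eq_left hx, max_eq_right (neg_nonpos.mpr hx)]
    ring

omit [Fintype V] [DecidableEq V] in
lemma max_ne_zero_iff (x : ℝ) : max x 0 ≠ 0 ↔ 0 < x := by
  constructor
  · intro h
    by_contra h2
    push_neg at h2
    exact h (max_eq_right h2)
  · intro h h2
    rw [max_eq_left h.le] at h2
    exact h.ne' h2

lemma rayleigh_core (hD : ∀ v, 0 < deg G B v)
    (hvol : ∀ S : Finset V, S.Nonempty → 0 < vol G B S) (hch : 0 ≤ cheegerR G B)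
    (f : V → ℝ) (horth : ∑ v, mu G B v * f v = 0) :
    cheegerR G B ^ 2 / 2 * ∑ v, mu G B v * f v ^ 2 ≤
      (1/2) * ∑ u, ∑ v, ew G B u v * (f u - f v) ^ 2 := by
  by_cases hV : (Finset.univ : Finset V).Nonempty
  case neg =>
    rw [Finset.not_nonempty_iff_eq_empty] at hV
    simp [hV]
  case pos =>
  obtain ⟨c, hc1, hc2⟩ := exists_median G B hD hV f
  set gp : V → ℝ := fun v => max (f v - c) 0 with hgpdef
  set gm : V → ℝ := fun v => max (c - f v) 0 with hgmdef
  have hgp_nonneg : ∀ v, 0 ≤ gp v := fun v => le_max_right _ _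
  have hgm_nonneg : ∀ v, 0 ≤ gm v := fun v => le_max_right _ _
  have hfp : (Finset.univ.filter fun v => gp v ≠ 0) = Finset.univ.filter fun v => c < f v := by
    apply Finset.filter_congr
    intro v _
    rw [hgpdef]
    simp only [max_ne_zero_iff]
    constructor
    · intro h; linarith
    · intro h; linarith
  have hfm : (Finset.univ.filter fun v => gm v ≠ 0) = Finset.univ.filter fun v => f v < c := by
    apply Finset.filter_congr
    intro v _
    rw [hgmdef]
    simp only [max_ne_zero_iff]
    constructor
    · intro h; linarith
    · intro h; linarith
  have hp := dirichlet_ge G B hD hvol hch gp hgp_nonneg (by rw [hfp]; exact hc1)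
  have hm := dirichlet_ge G B hD hvol hch gm hgm_nonneg (by rw [hfm]; exact hc2)
  have hsum : (∑ v, mu G B v * gp v ^ 2) + (∑ v, mu G B v * gm v ^ 2)
      ≥ ∑ v, mu G B v * f v ^ 2 := by
    have h1 : (∑ v, mu G B v * gp v ^ 2) + (∑ v, mu G B v * gm v ^ 2)
        = ∑ v, mu G B v * (f v - c) ^ 2 := by
      rw [← Finset.sum_add_distrib]
      refine Finset.sum_congr rfl fun v _ => ?_
      have h2 : gp v ^ 2 + gm v ^ 2 = (f v - c) ^ 2 := by
        have := sq_split (f v - c)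
        rw [show -(f v - c) = c - f v by ring] at this
        exact this
      linear_combination (mu G B v) * h2
    rw [h1]
    have h3 : ∑ v, mu G B v * (f v - c) ^ 2
        = (∑ v, mu G B v * f v ^ 2) - 2 * c * (∑ v, mu G B v * f v)
          + c ^ 2 * ∑ v, mu G B v := by
      rw [Finset.mul_sum, Finset.mul_sum, ← Finset.sum_sub_distrib, ← Finset.sum_add_distrib]
      refine Finset.sum_congr rfl fun v _ => by ring
    rw [h3, horth]
    have h4 : 0 ≤ ∑ v, mu G B v := Finset.sum_nonneg fun v _ => (mu_pos G B hD v).le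
    nlinarith [sq_nonneg c]
  have hdir : (∑ u, ∑ v, ew G B u v * (gp u - gp v) ^ 2)
      + (∑ u, ∑ v, ew G B u v * (gm u - gm v) ^ 2)
      ≤ ∑ u, ∑ v, ew G B u v * (f u - f v) ^ 2 := by
    rw [← Finset.sum_add_distrib]
    refine Finset.sum_le_sum fun u _ => ?_
    rw [← Finset.sum_add_distrib]
    refine Finset.sum_le_sum fun v _ => ?_
    have hk := key_sq (f u - c) (f v - c)
    rw [show -(f u - c) = c - f u by ring, show -(f v - c) = c - f v by ring,
      show f u - c - (f v - c) = f u - f v by ring] at hk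
    have := mul_le_mul_of_nonneg_left hk (ew_nonneg G B u v)
    calc ew G B u v * (gp u - gp v) ^ 2 + ew G B u v * (gm u - gm v) ^ 2
        = ew G B u v * ((gp u - gp v) ^ 2 + (gm u - gm v) ^ 2) := by ring
      _ ≤ ew G B u v * (f u - f v) ^ 2 := this
  have hmul := mul_le_mul_of_nonneg_left hsum.le (by positivity : (0:ℝ) ≤ cheegerR G B ^ 2 / 2)
  calc cheegerR G B ^ 2 / 2 * ∑ v, mu G B v * f v ^ 2
      ≤ cheegerR G B ^ 2 / 2 * ((∑ v, mu G B v * gp v ^ 2) + (∑ v, mu G B v * gm v ^ 2)) := by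
        apply mul_le_mul_of_nonneg_left hsum (by positivity)
    _ = cheegerR G B ^ 2 / 2 * (∑ v, mu G B v * gp v ^ 2)
        + cheegerR G B ^ 2 / 2 * (∑ v, mu G B v * gm v ^ 2) := by ring
    _ ≤ (1/2) * (∑ u, ∑ v, ew G B u v * (gp u - gp v) ^ 2)
        + (1/2) * (∑ u, ∑ v, ew G B u v * (gm u - gm v) ^ 2) := add_le_add hp hm
    _ ≤ (1/2) * ∑ u, ∑ v, ew G B u v * (f u - f v) ^ 2 := by linarith [hdir]

lemma rayleigh_elem_ge (hD : ∀ v, 0 < deg G B v)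
    (hvol : ∀ S : Finset V, S.Nonempty → 0 < vol G B S) (hch : 0 ≤ cheegerR G B)
    (x : V → ℝ) (hx : x ≠ 0)
    (horth : x ⬝ᵥ ((Dhalf G B * Qhalf B) *ᵥ fun _ => 1) = 0) :
    cheegerR G B ^ 2 / 2 ≤ x ⬝ᵥ ((Qhalf B * NLR G B * Qinvhalf B) *ᵥ x) / (x ⬝ᵥ x) := by
  set f : V → ℝ := fun v => x v / (Real.sqrt (deg G B v) * Real.sqrt (qw B v)) with hfdef
  have hsd : ∀ v, Real.sqrt (deg G B v) ≠ 0 :=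
    fun v => (Real.sqrt_pos.mpr (hD v)).ne'
  have hsq : ∀ v, Real.sqrt (qw B v) ≠ 0 :=
    fun v => (Real.sqrt_pos.mpr (qw_pos B v)).ne'
  have hx_eq : ∀ v, x v = f v * (Real.sqrt (deg G B v) * Real.sqrt (qw B v)) := by
    intro v
    rw [hfdef]
    exact (div_mul_cancel₀ (x v) (mul_ne_zero (hsd v) (hsq v))).symm
  -- orthogonality in terms of f
  have horth' : ∑ v, mu G B v * f v = 0 := by
    have h1 : x ⬝ᵥ ((Dhalf G B * Qhalf B) *ᵥ fun _ => 1)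
        = ∑ v, x v * (Real.sqrt (deg G B v) * Real.sqrt (qw B v)) := by
      unfold Dhalf Qhalf
      rw [Matrix.diagonal_mul_diagonal]
      unfold dotProduct
      refine Finset.sum_congr rfl fun v _ => ?_
      rw [Matrix.mulVec_diagonal, mul_one]
    rw [h1] at horth
    rw [← horth]
    refine Finset.sum_congr rfl fun v _ => ?_
    rw [hx_eq v]
    unfold mu
    set a := Real.sqrt (deg G B v) with ha'
    set b := Real.sqrt (qw B v) with hb'
    have ha : a * a = deg G B v := Real.mul_self_sqrt (hD v).le
    have hb : b * b = qw B v := Real.mul_self_sqrt (qw_pos B v).le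
    rw [← ha, ← hb]
    ring
  -- denominator in terms of f
  have hden : x ⬝ᵥ x = ∑ v, mu G B v * f v ^ 2 := by
    unfold dotProduct
    refine Finset.sum_congr rfl fun v _ => ?_
    rw [hx_eq v]
    unfold mu
    set a := Real.sqrt (deg G B v) with ha'
    set b := Real.sqrt (qw B v) with hb'
    have ha : a * a = deg G B v := Real.mul_self_sqrt (hD v).le
    have hb : b * b = qw B v := Real.mul_self_sqrt (qw_pos B v).le
    rw [← ha, ← hb]
    ring
  -- numerator in terms of f
  have hnum : x ⬝ᵥ ((Qhalf B * NLR G B * Qinvhalf B) *ᵥ x)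
      = (1/2) * ∑ u, ∑ v, ew G B u v * (f u - f v) ^ 2 := by
    have hM : ∀ u v, (Qhalf B * NLR G B * Qinvhalf B) u v
        = Real.sqrt (qw B u) * ((Real.sqrt (deg G B u))⁻¹ * LR G B u v
          * (Real.sqrt (deg G B v))⁻¹) * (Real.sqrt (qw B v))⁻¹ := by
      intro u v
      unfold Qhalf NLR Qinvhalf Dinvhalf
      rw [Matrix.mul_diagonal, Matrix.diagonal_mul]
      congr 1
      rw [Matrix.mul_diagonal, Matrix.diagonal_mul]
    have h1 : x ⬝ᵥ ((Qhalf B * NLR G B * Qinvhalf B) *ᵥ x)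
        = ∑ u, ∑ v, qw B u * LR G B u v * (f u * f v) := by
      simp only [dotProduct, Matrix.mulVec, Finset.mul_sum]
      refine Finset.sum_congr rfl fun u _ => Finset.sum_congr rfl fun v _ => ?_
      rw [hM u v, hx_eq u, hx_eq v]
      set au := Real.sqrt (deg G B u) with hau'
      set av := Real.sqrt (deg G B v) with hav'
      set bu := Real.sqrt (qw B u) with hbu'
      set bv := Real.sqrt (qw B v) with hbv'
      have hau : au ≠ 0 := hsd u
      have hav : av ≠ 0 := hsd v
      have hbu : bu ≠ 0 := hsq u
      have hbv : bv ≠ 0 := hsq v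
      have hqu : bu * bu = qw B u := Real.mul_self_sqrt (qw_pos B u).le
      rw [← hqu]
      field_simp
    rw [h1]
    have h2 : ∀ u v, qw B u * LR G B u v * (f u * f v)
        = (if u = v then mu G B u * (f u * f v) else 0) - ew G B u v * (f u * f v) := by
      intro u v
      unfold LR Dmat
      rw [Matrix.sub_apply]
      by_cases huv : u = v
      · subst huv
        rw [Matrix.diagonal_apply_eq, if_pos rfl, ew_eq_q_mul_reflAdj]
        unfold mu
        ring
      · rw [Matrix.diagonal_apply_ne _ huv, if_neg huv, ew_eq_q_mul_reflAdj]
        ring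
    have h3 : ∑ u, ∑ v, qw B u * LR G B u v * (f u * f v)
        = (∑ u, mu G B u * f u ^ 2) - ∑ u, ∑ v, ew G B u v * (f u * f v) := by
      rw [← Finset.sum_sub_distrib]
      refine Finset.sum_congr rfl fun u _ => ?_
      calc ∑ v, qw B u * LR G B u v * (f u * f v)
          = ∑ v, ((if u = v then mu G B u * (f u * f v) else 0) - ew G B u v * (f u * f v)) :=
            Finset.sum_congr rfl fun v _ => h2 u v
        _ = (∑ v, (if u = v then mu G B u * (f u * f v) else 0))
            - ∑ v, ew G B u v * (f u * f v) := Finset.sum_sub_distrib _ _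
        _ = mu G B u * f u ^ 2 - ∑ v, ew G B u v * (f u * f v) := by
            rw [Finset.sum_ite_eq]
            simp [sq]
    rw [h3]
    have h4 : ∑ u, ∑ v, ew G B u v * (f u - f v) ^ 2
        = 2 * (∑ u, mu G B u * f u ^ 2) - 2 * ∑ u, ∑ v, ew G B u v * (f u * f v) := by
      have hpt : ∀ u v, ew G B u v * (f u - f v) ^ 2
          = ew G B u v * f u ^ 2 + ew G B u v * f v ^ 2 - 2 * (ew G B u v * (f u * f v)) := by
        intro u v; ring
      calc ∑ u, ∑ v, ew G B u v * (f u - f v) ^ 2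
          = ∑ u, ∑ v, (ew G B u v * f u ^ 2 + ew G B u v * f v ^ 2
            - 2 * (ew G B u v * (f u * f v))) :=
            Finset.sum_congr rfl fun u _ => Finset.sum_congr rfl fun v _ => hpt u v
        _ = (∑ u, ∑ v, ew G B u v * f u ^ 2) + (∑ u, ∑ v, ew G B u v * f v ^ 2)
            - 2 * ∑ u, ∑ v, ew G B u v * (f u * f v) := by
            simp only [Finset.sum_sub_distrib, Finset.sum_add_distrib, Finset.mul_sum]
        _ = 2 * (∑ u, mu G B u * f u ^ 2) - 2 * ∑ u, ∑ v, ew G B u v * (f u * f v) := by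
            have e1 : ∑ u, ∑ v, ew G B u v * f u ^ 2 = ∑ u, mu G B u * f u ^ 2 := by
              refine Finset.sum_congr rfl fun u _ => ?_
              rw [mu_eq_sum, Finset.sum_mul]
            have e2 : ∑ u, ∑ v, ew G B u v * f v ^ 2 = ∑ v, mu G B v * f v ^ 2 := by
              rw [Finset.sum_comm]
              refine Finset.sum_congr rfl fun v _ => ?_
              rw [mu_eq_sum', Finset.sum_mul]
            rw [e1, e2]
            ring
    rw [h4]
    ring
  -- denominator is positive
  have hdenpos : 0 < x ⬝ᵥ x := by
    obtain ⟨v₀, hv₀⟩ := Function.ne_iff.mp hx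
    unfold dotProduct
    refine Finset.sum_pos' (fun v _ => mul_self_nonneg (x v)) ⟨v₀, Finset.mem_univ v₀, ?_⟩
    exact mul_self_pos.mpr hv₀
  rw [le_div_iff₀ hdenpos, hden, hnum]
  exact rayleigh_core G B hD hvol hch f horth'

end aux

end RN

open RN

/-- **Nontrivial direction of the Cheeger inequality.** For a finite simple graph `G` with
boundary `B ⊆ V` such that every diagonal entry of `D` is strictly positive and `vol(S) > 0`
for every nonempty `S ⊆ V`, the first nontrivial eigenvalue of the normalized reflected
Neumann Laplacian satisfies `λ_R ≥ h_R² / 2`. -/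
theorem lambdaR_ge_cheegerR_sq_div_two {V : Type*} [Fintype V] [DecidableEq V]
    (G : SimpleGraph V) [DecidableRel G.Adj] (B : Finset V)
    (hD : ∀ v, 0 < deg G B v)
    (hvol : ∀ S : Finset V, S.Nonempty → 0 < vol G B S) :
    lambdaR G B ≥ (cheegerR G B) ^ 2 / 2 := by
  by_cases hex : ∃ v w : V, v ≠ w
  · obtain ⟨v, w, hvw⟩ := hex
    have hSne : ({v} : Finset V) ≠ Finset.univ := by
      intro h
      have h2 : w ∈ ({v} : Finset V) := h ▸ Finset.mem_univ w
      rw [Finset.mem_singleton] at h2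
      exact hvw h2.symm
    have hchne : {r : ℝ | ∃ S : Finset V, S.Nonempty ∧ S ≠ Finset.univ ∧
        r = mMeas G B S Sᶜ / min (vol G B S) (vol G B Sᶜ)}.Nonempty :=
      ⟨_, {v}, Finset.singleton_nonempty v, hSne, rfl⟩
    have hch : 0 ≤ cheegerR G B := cheeger_nonneg G B hvol hchne
    rw [ge_iff_le]
    unfold lambdaR
    apply le_csInf
    · set p : V → ℝ := fun u => Real.sqrt (deg G B u) * Real.sqrt (qw B u) with hpdef
      have hp : ∀ u, 0 < p u := fun u =>
        mul_pos (Real.sqrt_pos.mpr (hD u)) (Real.sqrt_pos.mpr (qw_pos B u))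
      set x : V → ℝ := fun u =>
        (if v = u then p w else 0) + (if w = u then -(p v) else 0) with hxdef
      have hwv : w ≠ v := fun h => hvw h.symm
      have hxv : x v = p w := by
        simp [hxdef, hwv]
      have hxne : x ≠ 0 := by
        intro h
        have h2 := congrFun h v
        rw [hxv] at h2
        exact (hp w).ne' h2
      have hmv : ∀ u, ((Dhalf G B * Qhalf B) *ᵥ fun _ => 1) u = p u := by
        intro u
        unfold Dhalf Qhalf
        rw [Matrix.diagonal_mul_diagonal, Matrix.mulVec_diagonal, mul_one]
      have horth : x ⬝ᵥ ((Dhalf G B * Qhalf B) *ᵥ fun _ => 1) = 0 := by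
        unfold dotProduct
        have hterm : ∀ u, x u * ((Dhalf G B * Qhalf B) *ᵥ fun _ => 1) u
            = (if v = u then p w * p u else 0) + (if w = u then -(p v) * p u else 0) := by
          intro u
          rw [hmv u]
          simp only [hxdef]
          rw [add_mul, ite_mul, ite_mul, zero_mul]
        calc ∑ u, x u * ((Dhalf G B * Qhalf B) *ᵥ fun _ => 1) u
            = ∑ u, ((if v = u then p w * p u else 0) + (if w = u then -(p v) * p u else 0)) :=
              Finset.sum_congr rfl fun u _ => hterm u
          _ = (∑ u, (if v = u then p w * p u else 0))
              + ∑ u, (if w = u then -(p v) * p u else 0) := Finset.sum_add_distrib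
          _ = p w * p v + -(p v) * p w := by
              rw [Finset.sum_ite_eq, Finset.sum_ite_eq]
              simp
          _ = 0 := by ring
      exact ⟨_, x, hxne, horth, rfl⟩
    · rintro r ⟨x, hxne, horth, rfl⟩
      exact rayleigh_elem_ge G B hD hvol hch x hxne horth
  · push_neg at hex
    have hset1 : {r : ℝ | ∃ x : V → ℝ, x ≠ 0 ∧
        x ⬝ᵥ ((Dhalf G B * Qhalf B) *ᵥ fun _ => 1) = 0 ∧
        r = x ⬝ᵥ ((Qhalf B * NLR G B * Qinvhalf B) *ᵥ x) / (x ⬝ᵥ x)} = ∅ := by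
      ext r
      simp only [Set.mem_setOf_eq, Set.mem_empty_iff_false, iff_false, not_exists]
      intro x hcontra
      obtain ⟨hxne, horth, _⟩ := hcontra
      obtain ⟨v₀, hv₀⟩ := Function.ne_iff.mp hxne
      have hsum : x ⬝ᵥ ((Dhalf G B * Qhalf B) *ᵥ fun _ => 1)
          = x v₀ * ((Dhalf G B * Qhalf B) *ᵥ fun _ => 1) v₀ := by
        unfold dotProduct
        exact Finset.sum_eq_single_of_mem v₀ (Finset.mem_univ v₀)
          (fun u _ hu => absurd (hex u v₀) hu)
      have hmv : ((Dhalf G B * Qhalf B) *ᵥ fun _ => 1) v₀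
          = Real.sqrt (deg G B v₀) * Real.sqrt (qw B v₀) := by
        unfold Dhalf Qhalf
        rw [Matrix.diagonal_mul_diagonal, Matrix.mulVec_diagonal, mul_one]
      rw [hsum, hmv] at horth
      have hppos : 0 < Real.sqrt (deg G B v₀) * Real.sqrt (qw B v₀) :=
        mul_pos (Real.sqrt_pos.mpr (hD v₀)) (Real.sqrt_pos.mpr (qw_pos B v₀))
      have hx0 : x v₀ = 0 := by
        rcases mul_eq_zero.mp horth with h | h
        · exact h
        · exact absurd h hppos.ne'
      exact hv₀ hx0
    have hset2 : {r : ℝ | ∃ S : Finset V, S.Nonempty ∧ S ≠ Finset.univ ∧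
        r = mMeas G B S Sᶜ / min (vol G B S) (vol G B Sᶜ)} = ∅ := by
      ext r
      simp only [Set.mem_setOf_eq, Set.mem_empty_iff_false, iff_false, not_exists]
      intro S hcontra
      obtain ⟨hS, hSu, _⟩ := hcontra
      obtain ⟨a, ha⟩ := hS
      obtain ⟨b, hb⟩ : ∃ b, b ∉ S := by
        by_contra h
        push_neg at h
        exact hSu (Finset.eq_univ_iff_forall.mpr h)
      exact hb (hex b a ▸ ha)
    rw [ge_iff_le]
    unfold lambdaR cheegerR
    rw [hset1, hset2, Real.sInf_empty]
    norm_num
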